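/- For every n with n ≤ 2 or n ≥ 5, the graph B'_{n,P_3} satisfies ι_2(B'_{n,P_3}) = ⌊(4n − ℓ(B'_{n,P_3}))/14⌋, where ℓ(B'_{n,P_3}) is the number of leaves of B'_{n,P_3}. -/

import Mathlib

open SimpleGraph

/-- `G` contains a copy of `H` as a (not necessarily induced) subgraph. -/
def SimpleGraph.ContainsCopy {V W : Type*} (G : SimpleGraph V) (H : SimpleGraph W) : Prop :=
  ∃ f : W ↪ V, ∀ a b, H.Adj a b → G.Adj (f a) (f b)

/-- The closed neighbourhood `N[D]` of a set `D` of vertices. -/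
def SimpleGraph.closedNbhdSet {V : Type*} (G : SimpleGraph V) (D : Set V) : Set V :=
  D ∪ ⋃ v ∈ D, G.neighborSet v

/-- `D` is an `F`-isolating set of `G`: the graph `G − N[D]` obtained by deleting the closed
neighbourhood of `D` contains no subgraph isomorphic to a member of the family `F`. -/
def SimpleGraph.IsIsolatingSet {V : Type*} (G : SimpleGraph V)
    (F : Set ((n : ℕ) × SimpleGraph (Fin n))) (D : Set V) : Prop :=
  ∀ H ∈ F, ¬ (G.induce (G.closedNbhdSet D)ᶜ).ContainsCopy H.2

/-- The `F`-isolation number of `G`: the minimum size of an `F`-isolating set. -/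
noncomputable def SimpleGraph.isolationNumber {V : Type*} (G : SimpleGraph V)
    (F : Set ((n : ℕ) × SimpleGraph (Fin n))) : ℕ :=
  sInf (Set.ncard '' {D : Set V | G.IsIsolatingSet F D})

/-- The family 𝓒 of all cycles `C_m`, `m ≥ 3`. -/
def CyclesFamily : Set ((n : ℕ) × SimpleGraph (Fin n)) :=
  {H | ∃ m : ℕ, 3 ≤ m ∧ H = ⟨m, SimpleGraph.cycleGraph m⟩}

/-- The family 𝓔_k of all connected graphs with at least `k` edges. -/
def EkFamily (k : ℕ) : Set ((n : ℕ) × SimpleGraph (Fin n)) :=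
  {H | H.2.Connected ∧ k ≤ H.2.edgeSet.ncard}

/-- The set of leaves (vertices of degree 1) of `G`. -/
def SimpleGraph.leafSet {V : Type*} (G : SimpleGraph V) : Set V :=
  {v | (G.neighborSet v).ncard = 1}

/-- `ℓ(G)`, the number of leaves of `G`. -/
noncomputable def SimpleGraph.numLeaves {V : Type*} (G : SimpleGraph V) : ℕ :=
  G.leafSet.ncard

/-- Adjacency (one direction) for the graph `B'_{n,P_3}` on vertex labels `0, …, n−1`:
for `n ≤ 3` it is the path `P_n`; for `n ≥ 4`, with `a = ⌊n/4⌋` and `b = n − 3a`,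
vertices `0, …, a−1` form a path, vertices `a, …, b−1` are joined to `a−1`, and for each
`i < a` the vertices `b+3i, b+3i+1, b+3i+2` form a copy of `P_3` with centre `b+3i+1`,
which is joined to `i`. -/
def BpP3Adj (n x y : ℕ) : Prop :=
  if n ≤ 3 then y = x + 1
  else
    (y = x + 1 ∧ x + 1 < n / 4) ∨
    (x = n / 4 - 1 ∧ n / 4 ≤ y ∧ y < n - 3 * (n / 4)) ∨
    (∃ i < n / 4, (x = n - 3 * (n / 4) + 3 * i ∧ y = x + 1) ∨
                  (x = n - 3 * (n / 4) + 3 * i + 1 ∧ y = x + 1)) ∨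
    (∃ i < n / 4, x = i ∧ y = n - 3 * (n / 4) + 3 * i + 1)

/-- The graph `B'_{n,P_3}`. -/
def BpP3 (n : ℕ) : SimpleGraph (Fin n) :=
  SimpleGraph.fromRel (fun x y => BpP3Adj n x.1 y.1)

/-! ### Auxiliary lemmas -/

@[reducible] private def RR (n x y : ℕ) : Prop :=
  (y = x + 1 ∧ x + 1 < n / 4) ∨
  (x = n / 4 - 1 ∧ n / 4 ≤ y ∧ y < n - 3 * (n / 4)) ∨
  (∃ i < n / 4, (x = n - 3 * (n / 4) + 3 * i ∧ y = x + 1) ∨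
                (x = n - 3 * (n / 4) + 3 * i + 1 ∧ y = x + 1)) ∨
  (∃ i < n / 4, x = i ∧ y = n - 3 * (n / 4) + 3 * i + 1)

private lemma bp_adj_iff {n : ℕ} (hn : 4 ≤ n) (x y : Fin n) :
    (BpP3 n).Adj x y ↔ x.1 ≠ y.1 ∧ (RR n x.1 y.1 ∨ RR n y.1 x.1) := by
  show (SimpleGraph.fromRel _).Adj x y ↔ _
  rw [SimpleGraph.fromRel_adj]
  simp only [BpP3Adj, if_neg (show ¬ n ≤ 3 by omega), ne_eq, Fin.ext_iff, RR]

private lemma bp_adj_of {n : ℕ} (hn : 4 ≤ n) {x y : Fin n} (hne : x.1 ≠ y.1)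
    (h : RR n x.1 y.1 ∨ RR n y.1 x.1) : (BpP3 n).Adj x y :=
  (bp_adj_iff hn x y).2 ⟨hne, h⟩

private lemma nbhd_extra {n x y : ℕ} (hn : 5 ≤ n) (hx1 : n/4 ≤ x) (hx2 : x < n - 3*(n/4))
    (h : RR n x y ∨ RR n y x) : y = n/4 - 1 := by
  rcases h with (⟨h1,h2⟩|⟨h1,h2,h3⟩|⟨i,hi,(⟨h1,h2⟩|⟨h1,h2⟩)⟩|⟨i,hi,h1,h2⟩) |
               (⟨h1,h2⟩|⟨h1,h2,h3⟩|⟨i,hi,(⟨h1,h2⟩|⟨h1,h2⟩)⟩|⟨i,hi,h1,h2⟩) <;> omega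

private lemma nbhd_leaf0 {n x y : ℕ} (hn : 5 ≤ n) {k : ℕ} (hk : k < n/4)
    (hx : x = n - 3*(n/4) + 3*k) (h : RR n x y ∨ RR n y x) : y = n - 3*(n/4) + 3*k + 1 := by
  rcases h with (⟨h1,h2⟩|⟨h1,h2,h3⟩|⟨i,hi,(⟨h1,h2⟩|⟨h1,h2⟩)⟩|⟨i,hi,h1,h2⟩) |
               (⟨h1,h2⟩|⟨h1,h2,h3⟩|⟨i,hi,(⟨h1,h2⟩|⟨h1,h2⟩)⟩|⟨i,hi,h1,h2⟩) <;> omega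

private lemma nbhd_leaf2 {n x y : ℕ} (hn : 5 ≤ n) {k : ℕ} (hk : k < n/4)
    (hx : x = n - 3*(n/4) + 3*k + 2) (h : RR n x y ∨ RR n y x) : y = n - 3*(n/4) + 3*k + 1 := by
  rcases h with (⟨h1,h2⟩|⟨h1,h2,h3⟩|⟨i,hi,(⟨h1,h2⟩|⟨h1,h2⟩)⟩|⟨i,hi,h1,h2⟩) |
               (⟨h1,h2⟩|⟨h1,h2,h3⟩|⟨i,hi,(⟨h1,h2⟩|⟨h1,h2⟩)⟩|⟨i,hi,h1,h2⟩) <;> omega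

private lemma nbhd_centre {n x y : ℕ} (hn : 5 ≤ n) {k : ℕ} (hk : k < n/4)
    (hx : x = n - 3*(n/4) + 3*k + 1) (h : RR n x y ∨ RR n y x) :
    y = k ∨ y = n - 3*(n/4) + 3*k ∨ y = n - 3*(n/4) + 3*k + 2 := by
  rcases h with (⟨h1,h2⟩|⟨h1,h2,h3⟩|⟨i,hi,(⟨h1,h2⟩|⟨h1,h2⟩)⟩|⟨i,hi,h1,h2⟩) |
               (⟨h1,h2⟩|⟨h1,h2,h3⟩|⟨i,hi,(⟨h1,h2⟩|⟨h1,h2⟩)⟩|⟨i,hi,h1,h2⟩) <;> omega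

private lemma classify {n : ℕ} (hn : 5 ≤ n) (w : ℕ) (hw : w < n) :
    w < n/4 ∨ (n/4 ≤ w ∧ w < n - 3*(n/4)) ∨
    ∃ i, i < n/4 ∧ (w = n - 3*(n/4) + 3*i ∨ w = n - 3*(n/4) + 3*i + 1 ∨
      w = n - 3*(n/4) + 3*i + 2) := by
  by_cases h : w < n - 3*(n/4)
  · omega
  · exact Or.inr (Or.inr ⟨(w - (n - 3*(n/4)))/3, by omega, by omega⟩)

private lemma mem_cnbhd {V : Type*} (G : SimpleGraph V) (D : Set V) (v : V) :
    v ∈ G.closedNbhdSet D ↔ v ∈ D ∨ ∃ d ∈ D, G.Adj d v := by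
  simp [SimpleGraph.closedNbhdSet, SimpleGraph.mem_neighborSet, Set.mem_iUnion]

private lemma nbhdSet_extra {n : ℕ} (hn : 5 ≤ n) (v : Fin n) (h1 : n/4 ≤ v.1)
    (h2 : v.1 < n - 3*(n/4)) :
    (BpP3 n).neighborSet v = {(⟨n/4 - 1, by omega⟩ : Fin n)} := by
  ext w
  simp only [SimpleGraph.mem_neighborSet, Set.mem_singleton_iff]
  constructor
  · intro hadj
    rw [bp_adj_iff (by omega)] at hadj
    exact Fin.ext (nbhd_extra hn h1 h2 hadj.2)
  · rintro rfl
    refine bp_adj_of (by omega) (by simp <;> omega) (Or.inr ?_)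
    refine Or.inr (Or.inl ⟨by simp, by simpa using h1, by simpa using h2⟩)

private lemma nbhdSet_leaf0 {n : ℕ} (hn : 5 ≤ n) (v : Fin n) {k : ℕ} (hk : k < n/4)
    (hv : v.1 = n - 3*(n/4) + 3*k) :
    (BpP3 n).neighborSet v = {(⟨n - 3*(n/4) + 3*k + 1, by omega⟩ : Fin n)} := by
  ext w
  simp only [SimpleGraph.mem_neighborSet, Set.mem_singleton_iff]
  constructor
  · intro hadj
    rw [bp_adj_iff (by omega)] at hadj
    exact Fin.ext (nbhd_leaf0 hn hk hv hadj.2)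
  · rintro rfl
    refine bp_adj_of (by omega) (by simp <;> omega) (Or.inl ?_)
    refine Or.inr (Or.inr (Or.inl ⟨k, hk, Or.inl ⟨hv, by simp <;> omega⟩⟩))

private lemma nbhdSet_leaf2 {n : ℕ} (hn : 5 ≤ n) (v : Fin n) {k : ℕ} (hk : k < n/4)
    (hv : v.1 = n - 3*(n/4) + 3*k + 2) :
    (BpP3 n).neighborSet v = {(⟨n - 3*(n/4) + 3*k + 1, by omega⟩ : Fin n)} := by
  ext w
  simp only [SimpleGraph.mem_neighborSet, Set.mem_singleton_iff]
  constructor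
  · intro hadj
    rw [bp_adj_iff (by omega)] at hadj
    exact Fin.ext (nbhd_leaf2 hn hk hv hadj.2)
  · rintro rfl
    refine bp_adj_of (by omega) (by simp <;> omega) (Or.inr ?_)
    refine Or.inr (Or.inr (Or.inl ⟨k, hk, Or.inr ⟨by simp, by simp <;> omega⟩⟩))

private lemma two_nbrs {n : ℕ} (v : Fin n) (u w : Fin n) (hu : (BpP3 n).Adj v u)
    (hw : (BpP3 n).Adj v w) (huw : u ≠ w) : ((BpP3 n).neighborSet v).ncard ≠ 1 := by
  have h : 1 < ((BpP3 n).neighborSet v).ncard := by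
    rw [Set.one_lt_ncard (Set.toFinite _)]
    exact ⟨u, hu, w, hw, huw⟩
  omega

private lemma leaf_iff {n : ℕ} (hn : 5 ≤ n) (v : Fin n) :
    v ∈ (BpP3 n).leafSet ↔ (n/4 ≤ v.1 ∧ v.1 < n - 3*(n/4)) ∨
      ∃ i, i < n/4 ∧ (v.1 = n - 3*(n/4) + 3*i ∨ v.1 = n - 3*(n/4) + 3*i + 2) := by
  constructor
  · intro hv
    rcases classify hn v.1 v.2 with hp | he | ⟨i, hi, hc⟩
    · -- path vertex: has two neighbours, contradiction
      exfalso
      have hc : (BpP3 n).Adj v ⟨n - 3*(n/4) + 3*v.1 + 1, by omega⟩ := by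
        refine bp_adj_of (by omega) (by simp <;> omega) (Or.inl ?_)
        exact Or.inr (Or.inr (Or.inr ⟨v.1, hp, rfl, rfl⟩))
      by_cases h2 : v.1 + 1 < n/4
      · refine two_nbrs v _ ⟨v.1+1, by omega⟩ hc ?_ (by simp [Fin.ext_iff] <;> omega) hv
        refine bp_adj_of (by omega) (by simp <;> omega) (Or.inl (Or.inl ⟨by simp, by simpa using h2⟩))
      by_cases h3 : 1 ≤ v.1
      · refine two_nbrs v _ ⟨v.1-1, by omega⟩ hc ?_ (by simp [Fin.ext_iff] <;> omega) hv
        refine bp_adj_of (by omega) (by simp <;> omega) (Or.inr (Or.inl ⟨by simp <;> omega, by simp <;> omega⟩))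
      · -- v = 0, n/4 = 1
        refine two_nbrs v _ ⟨1, by omega⟩ hc ?_ (by simp [Fin.ext_iff] <;> omega) hv
        refine bp_adj_of (by omega) (by simp <;> omega) (Or.inl (Or.inr (Or.inl ⟨by omega, by simp <;> omega, by simp <;> omega⟩)))
    · exact Or.inl he
    · rcases hc with h0 | h1 | h2
      · exact Or.inr ⟨i, hi, Or.inl h0⟩
      · -- centre: two neighbours, contradiction
        exfalso
        refine two_nbrs v ⟨n - 3*(n/4) + 3*i, by omega⟩ ⟨n - 3*(n/4) + 3*i + 2, by omega⟩
          ?_ ?_ (by simp [Fin.ext_iff] <;> omega) hv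
        · refine bp_adj_of (by omega) (by simp <;> omega) (Or.inr ?_)
          exact Or.inr (Or.inr (Or.inl ⟨i, hi, Or.inl ⟨rfl, by simp <;> omega⟩⟩))
        · refine bp_adj_of (by omega) (by simp <;> omega) (Or.inl ?_)
          exact Or.inr (Or.inr (Or.inl ⟨i, hi, Or.inr ⟨by omega, by simp <;> omega⟩⟩))
      · exact Or.inr ⟨i, hi, Or.inr h2⟩
  · intro hv
    show ((BpP3 n).neighborSet v).ncard = 1
    rcases hv with he | ⟨i, hi, h0 | h2⟩
    · rw [nbhdSet_extra hn v he.1 he.2]; exact Set.ncard_singleton _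
    · rw [nbhdSet_leaf0 hn v hi h0]; exact Set.ncard_singleton _
    · rw [nbhdSet_leaf2 hn v hi h2]; exact Set.ncard_singleton _

private lemma ncard_of_val_image {n m : ℕ} (S : Set (Fin n)) (g : ℕ → ℕ)
    (h : Fin.val '' S = g '' Set.Iio m) (hg : Set.InjOn g (Set.Iio m)) : S.ncard = m := by
  rw [← Set.ncard_image_of_injective S Fin.val_injective, h, Set.ncard_image_of_injOn hg,
    ← Finset.coe_Iio, Set.ncard_coe_finset, Nat.card_Iio]

private def gLeaf (n k : ℕ) : ℕ :=
  if k < n % 4 then n/4 + k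
  else (n - 3*(n/4)) + 3*((k - n % 4)/2) + 2*((k - n % 4) % 2)

private lemma gLeaf_spec {n : ℕ} (hn : 5 ≤ n) {k : ℕ} (hk : k < n % 4 + 2*(n/4)) :
    gLeaf n k < n ∧ ((n/4 ≤ gLeaf n k ∧ gLeaf n k < n - 3*(n/4)) ∨
      ∃ i, i < n/4 ∧ (gLeaf n k = n - 3*(n/4) + 3*i ∨ gLeaf n k = n - 3*(n/4) + 3*i + 2)) := by
  unfold gLeaf
  split_ifs with h
  · exact ⟨by omega, Or.inl (by omega)⟩
  · exact ⟨by omega, Or.inr ⟨(k - n % 4)/2, by omega, by omega⟩⟩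

private lemma numLeaves_eq {n : ℕ} (hn : 5 ≤ n) :
    (BpP3 n).numLeaves = n % 4 + 2*(n/4) := by
  apply ncard_of_val_image _ (gLeaf n)
  · ext x
    simp only [Set.mem_image, Set.mem_Iio]
    constructor
    · rintro ⟨v, hv, rfl⟩
      rw [leaf_iff hn] at hv
      rcases hv with he | ⟨i, hi, h0 | h2⟩
      · exact ⟨v.1 - n/4, by omega, by unfold gLeaf; split_ifs <;> omega⟩
      · exact ⟨n % 4 + 2*i, by omega, by unfold gLeaf; split_ifs <;> omega⟩
      · exact ⟨n % 4 + 2*i + 1, by omega, by unfold gLeaf; split_ifs <;> omega⟩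
    · rintro ⟨k, hk, rfl⟩
      obtain ⟨h1, h2⟩ := gLeaf_spec hn hk
      exact ⟨⟨gLeaf n k, h1⟩, (leaf_iff hn _).2 h2, rfl⟩
  · intro p hp q hq hpq
    simp only [Set.mem_Iio] at hp hq
    unfold gLeaf at hpq
    split_ifs at hpq <;> omega

private lemma dset_ncard {n : ℕ} (hn : 5 ≤ n) :
    ({v : Fin n | v.1 < n/4} : Set (Fin n)).ncard = n/4 := by
  apply ncard_of_val_image _ id
  · rw [Set.image_id]
    ext x
    simp only [Set.mem_image, Set.mem_Iio, Set.mem_setOf_eq]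
    constructor
    · rintro ⟨v, hv, rfl⟩; exact hv
    · intro hx; exact ⟨⟨x, by omega⟩, hx, rfl⟩
  · exact Function.injective_id.injOn

private lemma p3_mem : (⟨3, SimpleGraph.pathGraph 3⟩ : (m : ℕ) × SimpleGraph (Fin m)) ∈ EkFamily 2 := by
  constructor
  · exact SimpleGraph.pathGraph_connected 2
  · show 2 ≤ (SimpleGraph.pathGraph 3).edgeSet.ncard
    have h1 : s((0 : Fin 3), (1 : Fin 3)) ∈ (SimpleGraph.pathGraph 3).edgeSet := by
      rw [SimpleGraph.mem_edgeSet, SimpleGraph.pathGraph_adj]; left; rfl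
    have h2 : s((1 : Fin 3), (2 : Fin 3)) ∈ (SimpleGraph.pathGraph 3).edgeSet := by
      rw [SimpleGraph.mem_edgeSet, SimpleGraph.pathGraph_adj]; left; rfl
    have h3 : 1 < (SimpleGraph.pathGraph 3).edgeSet.ncard := by
      rw [Set.one_lt_ncard (Set.toFinite _)]
      exact ⟨_, h1, _, h2, by decide⟩
    omega

private lemma compl_classify {n : ℕ} (hn : 5 ≤ n) (D : Set (Fin n))
    (hD : D = {v : Fin n | v.1 < n/4}) (w : Fin n)
    (hw : w ∈ ((BpP3 n).closedNbhdSet D)ᶜ) :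
    ∃ i, i < n/4 ∧ (w.1 = n - 3*(n/4) + 3*i ∨ w.1 = n - 3*(n/4) + 3*i + 2) := by
  rw [Set.mem_compl_iff, mem_cnbhd] at hw
  push_neg at hw
  obtain ⟨hw1, hw2⟩ := hw
  rcases classify hn w.1 w.2 with hp | he | ⟨i, hi, hc⟩
  · exact absurd (by rw [hD]; exact hp) hw1
  · exfalso
    refine hw2 ⟨n/4 - 1, by omega⟩ (by rw [hD]; simp; omega) ?_
    refine bp_adj_of (by omega) (by simp <;> omega) (Or.inl ?_)
    exact Or.inr (Or.inl ⟨rfl, he.1, he.2⟩)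
  · rcases hc with h0 | h1 | h2
    · exact ⟨i, hi, Or.inl h0⟩
    · exfalso
      refine hw2 ⟨i, by omega⟩ (by rw [hD]; simpa using hi) ?_
      refine bp_adj_of (by omega) (by simp <;> omega) (Or.inl ?_)
      exact Or.inr (Or.inr (Or.inr ⟨i, hi, rfl, h1⟩))
    · exact ⟨i, hi, Or.inr h2⟩

private lemma upper {n : ℕ} (hn : 5 ≤ n) :
    (BpP3 n).IsIsolatingSet (EkFamily 2) {v : Fin n | v.1 < n/4} := by
  rintro H ⟨hconn, hcard⟩ ⟨f, hf⟩
  have hne : H.2.edgeSet.Nonempty := by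
    rcases H.2.edgeSet.eq_empty_or_nonempty with h | h
    · rw [h, Set.ncard_empty] at hcard; omega
    · exact h
  obtain ⟨u, v, huv⟩ : ∃ u v, H.2.Adj u v := by
    obtain ⟨e, he⟩ := hne
    induction e using Sym2.ind with
    | _ u v => exact ⟨u, v, he⟩
  have hA := hf u v huv
  simp only [SimpleGraph.comap_adj, Function.Embedding.coe_subtype] at hA
  obtain ⟨i, hi, hfu⟩ := compl_classify hn _ rfl _ (f u).2
  obtain ⟨j, hj, hfv⟩ := compl_classify hn _ rfl _ (f v).2
  rw [bp_adj_iff (by omega)] at hA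
  rcases hfu with h0 | h2
  · have := nbhd_leaf0 hn hi h0 hA.2
    omega
  · have := nbhd_leaf2 hn hi h2 hA.2
    omega

private lemma adj_copy {n : ℕ} (hn : 5 ≤ n) {i : ℕ} (hi : i < n/4) (x y : Fin n)
    (h : (x.1 = n-3*(n/4)+3*i ∧ y.1 = n-3*(n/4)+3*i+1) ∨
         (x.1 = n-3*(n/4)+3*i+1 ∧ y.1 = n-3*(n/4)+3*i+2)) : (BpP3 n).Adj x y := by
  refine bp_adj_of (by omega) (by omega) (Or.inl ?_)
  exact Or.inr (Or.inr (Or.inl ⟨i, hi, by omega⟩))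

private lemma lower {n : ℕ} (hn : 5 ≤ n) (D : Set (Fin n))
    (hD : (BpP3 n).IsIsolatingSet (EkFamily 2) D) : n/4 ≤ D.ncard := by
  classical
  have key : ∀ i, i < n/4 → ∃ d, d ∈ D ∧ (d.1 = i ∨ d.1 = n-3*(n/4)+3*i ∨
      d.1 = n-3*(n/4)+3*i+1 ∨ d.1 = n-3*(n/4)+3*i+2) := by
    intro i hi
    by_contra hcon
    push_neg at hcon
    have hT : ∀ t : ℕ, t < 3 → ∀ h : n - 3*(n/4) + 3*i + t < n,
        (⟨n - 3*(n/4) + 3*i + t, h⟩ : Fin n) ∈ ((BpP3 n).closedNbhdSet D)ᶜ := by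
      intro t ht h
      rw [Set.mem_compl_iff, mem_cnbhd]
      push_neg
      constructor
      · intro hmem
        have h1 := hcon _ hmem
        have h2 : (⟨n - 3*(n/4) + 3*i + t, h⟩ : Fin n).1 = n - 3*(n/4) + 3*i + t := rfl
        omega
      · intro d hd hadj
        rw [bp_adj_iff (by omega)] at hadj
        have hsym : RR n (n - 3*(n/4) + 3*i + t) d.1 ∨ RR n d.1 (n - 3*(n/4) + 3*i + t) :=
          hadj.2.symm
        have hdv := hcon d hd
        interval_cases t
        · have := nbhd_leaf0 hn hi (by omega) hsym
          clear hsym hadj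
          omega
        · have := nbhd_centre hn hi (by omega) hsym
          clear hsym hadj
          omega
        · have := nbhd_leaf2 hn hi (by omega) hsym
          clear hsym hadj
          omega
    refine hD ⟨3, SimpleGraph.pathGraph 3⟩ p3_mem
      ⟨⟨fun t => ⟨⟨n - 3*(n/4) + 3*i + t.1, by have h3 : t.1 < 3 := t.2; omega⟩,
        hT t.1 t.2 _⟩, ?_⟩, ?_⟩
    · intro s t hst
      have h1 : n - 3*(n/4) + 3*i + s.1 = n - 3*(n/4) + 3*i + t.1 := by
        have := congrArg (fun z => (z : Fin n).1) (congrArg Subtype.val hst)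
        simpa using this
      exact Fin.ext (by omega)
    · intro u v huv
      rw [SimpleGraph.pathGraph_adj] at huv
      simp only [SimpleGraph.comap_adj, Function.Embedding.coe_subtype,
        Function.Embedding.coeFn_mk]
      have hu3 : u.1 < 3 := u.2
      have hv3 : v.1 < 3 := v.2
      refine bp_adj_of (by omega) (show n - 3*(n/4) + 3*i + u.1 ≠ n - 3*(n/4) + 3*i + v.1
        by omega) ?_
      show RR n (n - 3*(n/4) + 3*i + u.1) (n - 3*(n/4) + 3*i + v.1) ∨
        RR n (n - 3*(n/4) + 3*i + v.1) (n - 3*(n/4) + 3*i + u.1)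
      have hcases : (u.1 = 0 ∧ v.1 = 1) ∨ (u.1 = 1 ∧ v.1 = 2) ∨
          (v.1 = 0 ∧ u.1 = 1) ∨ (v.1 = 1 ∧ u.1 = 2) := by omega
      rcases hcases with ⟨h1, h2⟩ | ⟨h1, h2⟩ | ⟨h1, h2⟩ | ⟨h1, h2⟩
      · exact Or.inl (Or.inr (Or.inr (Or.inl ⟨i, hi, Or.inl ⟨by omega, by omega⟩⟩)))
      · exact Or.inl (Or.inr (Or.inr (Or.inl ⟨i, hi, Or.inr ⟨by omega, by omega⟩⟩)))
      · exact Or.inr (Or.inr (Or.inr (Or.inl ⟨i, hi, Or.inl ⟨by omega, by omega⟩⟩)))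
      · exact Or.inr (Or.inr (Or.inr (Or.inl ⟨i, hi, Or.inr ⟨by omega, by omega⟩⟩)))
  let c : ℕ → Fin n := fun i => if h : i < n/4 then (key i h).choose else ⟨0, by omega⟩
  have hc : ∀ i, i < n/4 → c i ∈ D ∧ ((c i).1 = i ∨ (c i).1 = n-3*(n/4)+3*i ∨
      (c i).1 = n-3*(n/4)+3*i+1 ∨ (c i).1 = n-3*(n/4)+3*i+2) := by
    intro i hi
    simp only [c, dif_pos hi]
    exact (key i hi).choose_spec
  have hfin : D.Finite := Set.toFinite D
  rw [Set.ncard_eq_toFinset_card D hfin]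
  have hcard := Finset.card_le_card_of_injOn (s := Finset.range (n/4)) (t := hfin.toFinset) c
    (fun i hi => by
      simp only [Finset.mem_range, Finset.mem_coe, Finset.coe_range, Set.mem_Iio] at hi
      exact hfin.mem_toFinset.2 (hc i hi).1)
    (fun p hp q hq hpq => by
      simp only [Finset.mem_range, Finset.coe_range, Set.mem_Iio] at hp hq
      have h1 := (hc p hp).2
      have h2 := (hc q hq).2
      rw [hpq] at h1
      omega)
  simpa using hcard

private lemma small_iso {n : ℕ} (hn : n ≤ 2) : (BpP3 n).IsIsolatingSet (EkFamily 2) ∅ := by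
  rintro ⟨m, H⟩ ⟨hconn, hcard⟩ ⟨f, hf⟩
  have h2 : 1 < H.edgeSet.ncard := hcard
  rw [Set.one_lt_ncard (Set.toFinite _)] at h2
  obtain ⟨e1, he1, e2, he2, hne⟩ := h2
  set g : Fin m → ℕ := fun w => (↑(f w) : Fin n).1 with hg
  have ginj : Function.Injective g :=
    Fin.val_injective.comp (Subtype.val_injective.comp f.injective)
  have himg : ∀ e ∈ H.edgeSet, Sym2.map g e = s(0, 1) := by
    intro e
    induction e using Sym2.ind with
    | _ u v =>
      intro he
      rw [SimpleGraph.mem_edgeSet] at he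
      have hA := hf u v he
      simp only [SimpleGraph.comap_adj, Function.Embedding.coe_subtype] at hA
      have hne' := hA.ne
      have h1 : g u < n := (↑(f u) : Fin n).2
      have h2' : g v < n := (↑(f v) : Fin n).2
      have h3 : g u ≠ g v := fun h => hne' (Fin.val_injective h)
      rw [Sym2.map_pair_eq, Sym2.eq_iff]
      omega
  exact hne (Sym2.map.injective ginj (by rw [himg e1 he1, himg e2 he2]))

theorem stmt_4 (n : ℕ) (hn : n ≤ 2 ∨ 5 ≤ n) :
    (BpP3 n).isolationNumber (EkFamily 2) = (4 * n - (BpP3 n).numLeaves) / 14 := by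
  rcases hn with hn | hn
  · have hm : (0:ℕ) ∈ Set.ncard '' {D : Set (Fin n) | (BpP3 n).IsIsolatingSet (EkFamily 2) D} :=
      ⟨∅, small_iso hn, Set.ncard_empty _⟩
    have h0 : (BpP3 n).isolationNumber (EkFamily 2) = 0 :=
      Nat.eq_zero_of_le_zero (Nat.sInf_le hm)
    rw [h0]
    omega
  · have hmem : n/4 ∈ Set.ncard '' {D : Set (Fin n) | (BpP3 n).IsIsolatingSet (EkFamily 2) D} :=
      ⟨_, upper hn, dset_ncard hn⟩
    have hup : (BpP3 n).isolationNumber (EkFamily 2) ≤ n/4 := Nat.sInf_le hmem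
    have hlo : n/4 ≤ (BpP3 n).isolationNumber (EkFamily 2) := by
      apply le_csInf ⟨_, hmem⟩
      rintro m ⟨D, hD, rfl⟩
      exact lower hn D hD
    have hL := numLeaves_eq hn
    omega
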